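/- Let D = Dⁿ ∪ Dˣ be a database instance, Q a monotone Boolean query with ¬Q(∅), and t ∈ Dⁿ. (1) If DF(D, Dⁿ, κ(Q), t) = ∅, then ρ(t) = 0. (2) Otherwise, ρ(t) = 1/|s|, where s is any element of DF(D, Dⁿ, κ(Q), t) of minimum cardinality (i.e., no s′ ∈ DF(D, Dⁿ, κ(Q), t) has |s′| < |s|). (Proposition 3.) -/
import Mathlib


open Classical

/-- `t` is an actual cause for query `Q` in instance `D` with endogenous part `Dn`. -/
def IsCause {U : Type*} [DecidableEq U] (D Dn : Finset U) (Q : Finset U → Prop) (t : U) : Prop :=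
  t ∈ Dn ∧ ∃ Γ ⊆ Dn, t ∉ Γ ∧ Q (D \ Γ) ∧ ¬ Q (D \ insert t Γ)

/-- The responsibility `ρ(t)`: `1/(1+m)` for `m` the minimum cardinality of a
contingency set for `t`, and `0` if `t` is not an actual cause. -/
noncomputable def resp {U : Type*} [DecidableEq U] (D Dn : Finset U) (Q : Finset U → Prop)
    (t : U) : ℚ :=
  if IsCause D Dn Q t then
    1 / ((sInf { n : ℕ | ∃ Γ ⊆ Dn, t ∉ Γ ∧ Q (D \ Γ) ∧ ¬ Q (D \ insert t Γ) ∧ Γ.card = n }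
      : ℕ) + 1)
  else 0

/-- `D'` is an S-repair of `D` w.r.t. the denial constraint `κ(Q)`. -/
def IsSRepair {U : Type*} [DecidableEq U] (D : Finset U) (Q : Finset U → Prop)
    (D' : Finset U) : Prop :=
  D' ⊆ D ∧ ¬ Q D' ∧ ∀ D'' ⊆ D, ¬ Q D'' → D' ⊆ D'' → D'' = D'

/-- `DF(D, Dⁿ, κ(Q), t)`: differences `D ∖ D'` for S-repairs `D'` with `t ∈ D ∖ D' ⊆ Dⁿ`. -/
def DF {U : Type*} [DecidableEq U] (D Dn : Finset U) (Q : Finset U → Prop) (t : U) :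
    Set (Finset U) :=
  { s | ∃ D', IsSRepair D Q D' ∧ s = D \ D' ∧ t ∈ s ∧ s ⊆ Dn }

/-- Any subset of `D` violating `Q` extends to an S-repair. -/
lemma extend_repair {U : Type*} [DecidableEq U] (D : Finset U) (Q : Finset U → Prop)
    (A : Finset U) (hA : A ⊆ D) (hnQ : ¬ Q A) :
    ∃ D', IsSRepair D Q D' ∧ A ⊆ D' := by
  classical
  have hne : (D.powerset.filter (fun B => ¬ Q B ∧ A ⊆ B)).Nonempty :=
    ⟨A, by simp [Finset.mem_filter, Finset.mem_powerset, hA, hnQ]⟩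
  obtain ⟨D', hD'mem, hmax⟩ := Finset.exists_max_image _ Finset.card hne
  simp only [Finset.mem_filter, Finset.mem_powerset] at hD'mem
  obtain ⟨hsub, hnQ', hA'⟩ := hD'mem
  refine ⟨D', ⟨hsub, hnQ', ?_⟩, hA'⟩
  intro D'' hD'' hnQ'' hsub'
  have hmem : D'' ∈ D.powerset.filter (fun B => ¬ Q B ∧ A ⊆ B) := by
    simp [Finset.mem_filter, Finset.mem_powerset, hD'', hnQ'', hA'.trans hsub']
  exact (Finset.eq_of_subset_of_card_le hsub' (hmax _ hmem)).symm

/-- A contingency set for `t` yields an element of `DF` contained in `insert t Γ`. -/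
lemma cause_to_DF {U : Type*} [DecidableEq U] (D Dn : Finset U) (Q : Finset U → Prop)
    (hmono : ∀ S S' : Finset U, S ⊆ S' → Q S → Q S') (t : U) (ht : t ∈ Dn) (htD : t ∈ D)
    (Γ : Finset U) (hΓ : Γ ⊆ Dn) (htΓ : t ∉ Γ)
    (hQ : Q (D \ Γ)) (hnQ : ¬ Q (D \ insert t Γ)) :
    ∃ s ∈ DF D Dn Q t, s ⊆ insert t Γ := by
  obtain ⟨D', hrep, hAD'⟩ := extend_repair D Q _ Finset.sdiff_subset hnQ
  have htD' : t ∉ D' := by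
    intro htD'
    apply hrep.2.1
    apply hmono (D \ Γ) D' _ hQ
    intro x hx
    rcases Finset.mem_sdiff.1 hx with ⟨hxD, hxΓ⟩
    by_cases hxt : x = t
    · exact hxt ▸ htD'
    · exact hAD' (Finset.mem_sdiff.2 ⟨hxD, by simp [hxt, hxΓ]⟩)
  have hsub : D \ D' ⊆ insert t Γ := by
    intro x hx
    rcases Finset.mem_sdiff.1 hx with ⟨hxD, hxD'⟩
    by_contra hxn
    exact hxD' (hAD' (Finset.mem_sdiff.2 ⟨hxD, hxn⟩))
  exact ⟨D \ D', ⟨D', hrep, rfl, Finset.mem_sdiff.2 ⟨htD, htD'⟩,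
    hsub.trans (Finset.insert_subset ht hΓ)⟩, hsub⟩

/-- An element of `DF` yields a contingency set of cardinality `|s| - 1`. -/
lemma DF_to_cause {U : Type*} [DecidableEq U] (D Dn : Finset U) (Q : Finset U → Prop)
    (hmono : ∀ S S' : Finset U, S ⊆ S' → Q S → Q S') (t : U)
    (s : Finset U) (hs : s ∈ DF D Dn Q t) :
    ∃ Γ ⊆ Dn, t ∉ Γ ∧ Q (D \ Γ) ∧ ¬ Q (D \ insert t Γ) ∧ Γ.card = s.card - 1 := by
  obtain ⟨D', ⟨hsubD, hnQD', hmaxD'⟩, hseq, hts, hsDn⟩ := hs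
  subst hseq
  have htD : t ∈ D := (Finset.mem_sdiff.1 hts).1
  have htD' : t ∉ D' := (Finset.mem_sdiff.1 hts).2
  refine ⟨(D \ D').erase t, (Finset.erase_subset _ _).trans hsDn, Finset.notMem_erase _ _,
    ?_, ?_, Finset.card_erase_of_mem hts⟩
  · -- Q (D \ erase t (D \ D'))
    have hQins : Q (insert t D') := by
      by_contra hq
      have := hmaxD' (insert t D') (Finset.insert_subset htD hsubD) hq
        (Finset.subset_insert _ _)
      exact htD' (this ▸ Finset.mem_insert_self t D')
    apply hmono (insert t D') _ _ hQins
    intro x hx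
    rcases Finset.mem_insert.1 hx with hxt | hxD'
    · subst hxt
      exact Finset.mem_sdiff.2 ⟨htD, Finset.notMem_erase _ _⟩
    · refine Finset.mem_sdiff.2 ⟨hsubD hxD', fun hmem => ?_⟩
      exact (Finset.mem_sdiff.1 (Finset.erase_subset _ _ hmem)).2 hxD'
  · -- ¬ Q (D \ insert t (erase t (D \ D')))
    rw [Finset.insert_erase hts, Finset.sdiff_sdiff_self_left,
      Finset.inter_eq_right.2 hsubD]
    exact hnQD'

theorem responsibility_from_DF
    {U : Type*} [DecidableEq U] (D Dn Dx : Finset U) (Q : Finset U → Prop)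
    (hD : D = Dn ∪ Dx) (hdisj : Disjoint Dn Dx)
    (hmono : ∀ S S' : Finset U, S ⊆ S' → Q S → Q S')
    (hempty : ¬ Q ∅)
    (t : U) (ht : t ∈ Dn) :
    (DF D Dn Q t = ∅ → resp D Dn Q t = 0) ∧
    (∀ s ∈ DF D Dn Q t, (∀ s' ∈ DF D Dn Q t, ¬ s'.card < s.card) →
      resp D Dn Q t = 1 / (s.card : ℚ)) := by
  have htD : t ∈ D := hD ▸ Finset.mem_union_left _ ht
  constructor
  · intro hDF
    rw [resp, if_neg]
    rintro ⟨-, Γ, hΓ, htΓ, hQ, hnQ⟩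
    obtain ⟨s, hsDF, -⟩ := cause_to_DF D Dn Q hmono t ht htD Γ hΓ htΓ hQ hnQ
    rw [hDF] at hsDF
    exact hsDF
  · intro s hs hmin
    obtain ⟨Γ, hΓ, htΓ, hQ, hnQ, hcard⟩ := DF_to_cause D Dn Q hmono t s hs
    have hcause : IsCause D Dn Q t := ⟨ht, Γ, hΓ, htΓ, hQ, hnQ⟩
    obtain ⟨-, -, -, hts, -⟩ := hs
    have hs1 : 1 ≤ s.card := Finset.card_pos.2 ⟨t, hts⟩
    have hlb : ∀ n ∈ { n : ℕ | ∃ Γ ⊆ Dn, t ∉ Γ ∧ Q (D \ Γ) ∧ ¬ Q (D \ insert t Γ) ∧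
        Γ.card = n }, s.card - 1 ≤ n := by
      rintro n ⟨Γ₀, hΓ₀, htΓ₀, hQ₀, hnQ₀, hcard₀⟩
      obtain ⟨s', hs'DF, hs'sub⟩ := cause_to_DF D Dn Q hmono t ht htD Γ₀ hΓ₀ htΓ₀ hQ₀ hnQ₀
      have h1 : s.card ≤ s'.card := Nat.le_of_not_lt (hmin s' hs'DF)
      have h2 : s'.card ≤ n + 1 := by
        calc s'.card ≤ (insert t Γ₀).card := Finset.card_le_card hs'sub
          _ ≤ Γ₀.card + 1 := Finset.card_insert_le _ _
          _ = n + 1 := by rw [hcard₀]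
      omega
    have hmem : s.card - 1 ∈ { n : ℕ | ∃ Γ ⊆ Dn, t ∉ Γ ∧ Q (D \ Γ) ∧ ¬ Q (D \ insert t Γ) ∧
        Γ.card = n } := ⟨Γ, hΓ, htΓ, hQ, hnQ, hcard⟩
    have hinf : sInf { n : ℕ | ∃ Γ ⊆ Dn, t ∉ Γ ∧ Q (D \ Γ) ∧ ¬ Q (D \ insert t Γ) ∧
        Γ.card = n } = s.card - 1 :=
      le_antisymm (Nat.sInf_le hmem) (hlb _ (Nat.sInf_mem ⟨_, hmem⟩))
    rw [resp, if_pos hcause, hinf]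
    congr 1
    push_cast [hs1]
    ring
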